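/- If s_1, ..., s_{n+1} are exchangeable real-valued random variables and Q_α^{(n+1)} denotes the ⌈(1-α)(n+1)⌉-th smallest value among s_1, ..., s_{n+1}, then P[s_{n+1} ≤ Q_α^{(n+1)}] ≥ (⌈(1-α)(n+1)⌉)/(n+1) ≥ 1 - α. -/

import Mathlib

open MeasureTheory ProbabilityTheory
open scoped ENNReal NNReal

/-- The `k`-th smallest element of a finite multiset of extended reals
(i.e. the `k`-th order statistic, 1-indexed). -/
noncomputable def kthSmallest (s : Multiset EReal) (k : ℕ) : EReal :=
  (s.sort (· ≤ ·)).getD (k - 1) ⊤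

/-- A finite family of random variables is exchangeable if its joint law is
invariant under every permutation of the indices. -/
def Exchangeable {Ω : Type*} [MeasureSpace Ω] {m : ℕ} {E : Type*} [MeasurableSpace E]
    (s : Fin m → Ω → E) : Prop :=
  ∀ π : Equiv.Perm (Fin m),
    Measure.map (fun ω i => s (π i) ω) (ℙ : Measure Ω) =
      Measure.map (fun ω i => s i ω) (ℙ : Measure Ω)

lemma countP_ofFn {m : ℕ} (f : Fin m → EReal) (p : EReal → Prop) [DecidablePred p] :
    Multiset.countP p ↑(List.ofFn f) = (Finset.univ.filter (fun i => p (f i))).card := by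
  rw [List.ofFn_eq_map]
  rw [show (Finset.univ.filter (fun i => p (f i))).card
      = Multiset.card (Multiset.filter (fun i => p (f i)) Finset.univ.val) from rfl]
  rw [← Multiset.countP_eq_card_filter, Fin.univ_def]
  simp only [Multiset.coe_countP, List.countP_map]
  rfl

lemma sorted_getElem_le {L : List EReal} (h : List.Pairwise (· ≤ ·) L) {i j : ℕ}
    (hij : i ≤ j) (hj : j < L.length) : L[i]'(lt_of_le_of_lt hij hj) ≤ L[j] := by
  have := List.Pairwise.rel_get_of_le h (a := ⟨i, lt_of_le_of_lt hij hj⟩) (b := ⟨j, hj⟩)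
    (by simpa using hij)
  simpa using this

lemma countP_le_kth {m k : ℕ} (s : Multiset EReal) (hcard : Multiset.card s = m)
    (hk1 : 1 ≤ k) (hk2 : k ≤ m) :
    k ≤ Multiset.countP (fun b => b ≤ kthSmallest s k) s := by
  set Q := kthSmallest s k with hQ
  set L := s.sort (· ≤ ·) with hL
  have hlen : L.length = m := by rw [hL, Multiset.length_sort, hcard]
  have hsorted : List.Pairwise (· ≤ ·) L := Multiset.pairwise_sort s _
  have hsq : (↑L : Multiset EReal) = s := Multiset.sort_eq s _
  have hklen : k - 1 < L.length := by omega
  have hgetD : Q = L[k-1] := by rw [hQ, kthSmallest, ← hL, List.getD_eq_getElem L ⊤ hklen]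
  rw [← hsq, Multiset.coe_countP]
  calc k = (L.take k).length := by rw [List.length_take]; omega
    _ = (L.take k).countP (fun b => decide (b ≤ Q)) := by
        rw [eq_comm, List.countP_eq_length]
        intro a ha
        simp only [decide_eq_true_eq]
        obtain ⟨i, hi, rfl⟩ := List.mem_iff_getElem.mp ha
        have hik : i < k ∧ i < L.length := by simpa [List.length_take] using hi
        rw [List.getElem_take, hgetD]
        exact sorted_getElem_le hsorted (by omega) hklen
    _ ≤ L.countP (fun b => decide (b ≤ Q)) := by
        conv_rhs => rw [← List.take_append_drop k L]
        rw [List.countP_append]; omega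

lemma le_kth_iff {m k : ℕ} (s : Multiset EReal) (hcard : Multiset.card s = m)
    (hk1 : 1 ≤ k) (hk2 : k ≤ m) {a : EReal} :
    a ≤ kthSmallest s k ↔ Multiset.countP (fun b => b < a) s ≤ k - 1 := by
  set Q := kthSmallest s k with hQ
  set L := s.sort (· ≤ ·) with hL
  have hlen : L.length = m := by rw [hL, Multiset.length_sort, hcard]
  have hsorted : List.Pairwise (· ≤ ·) L := Multiset.pairwise_sort s _
  have hsq : (↑L : Multiset EReal) = s := Multiset.sort_eq s _
  have hklen : k - 1 < L.length := by omega
  have hgetD : Q = L[k-1] := by rw [hQ, kthSmallest, ← hL, List.getD_eq_getElem L ⊤ hklen]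
  rw [← hsq, Multiset.coe_countP]
  constructor
  · intro hle
    have hsplit : L.countP (fun b => decide (b < a)) =
        (L.take (k-1)).countP (fun b => decide (b < a)) +
        (L.drop (k-1)).countP (fun b => decide (b < a)) := by
      conv_lhs => rw [← List.take_append_drop (k-1) L]
      rw [List.countP_append]
    have hdrop : (L.drop (k-1)).countP (fun b => decide (b < a)) = 0 := by
      rw [List.countP_eq_zero]
      intro b hb
      simp only [decide_eq_true_eq, not_lt]
      obtain ⟨j, hj, rfl⟩ := List.mem_iff_getElem.mp hb
      have hjL : k - 1 + j < L.length := by rw [List.length_drop] at hj; omega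
      rw [List.getElem_drop]
      calc a ≤ Q := hle
        _ = L[k-1] := hgetD
        _ ≤ L[k-1+j] := sorted_getElem_le hsorted (by omega) hjL
    have htake : (L.take (k-1)).countP (fun b => decide (b < a)) ≤ k - 1 := by
      calc _ ≤ (L.take (k-1)).length := List.countP_le_length
        _ ≤ k - 1 := by rw [List.length_take]; omega
    omega
  · intro hcount
    set c := L.countP (fun b => decide (b < a)) with hc
    have hck : c ≤ k - 1 := hcount
    have hcL : c < L.length := by omega
    have haLc : a ≤ L[c] := by
      by_contra hcon
      push_neg at hcon
      have : c + 1 ≤ c := by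
        calc c + 1 = (L.take (c+1)).length := by rw [List.length_take]; omega
          _ = (L.take (c+1)).countP (fun b => decide (b < a)) := by
              rw [eq_comm, List.countP_eq_length]
              intro b hb
              simp only [decide_eq_true_eq]
              obtain ⟨i, hi, rfl⟩ := List.mem_iff_getElem.mp hb
              have hik : i < c + 1 ∧ i < L.length := by simpa [List.length_take] using hi
              rw [List.getElem_take]
              exact lt_of_le_of_lt (sorted_getElem_le hsorted (by omega) hcL) hcon
          _ ≤ c := by
              conv_rhs => rw [hc]
              conv_rhs => rw [← List.take_append_drop (c+1) L]
              rw [List.countP_append]; omega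
      omega
    calc a ≤ L[c] := haLc
      _ ≤ L[k-1] := sorted_getElem_le hsorted (by omega) hklen
      _ = Q := hgetD.symm

lemma ofFn_perm {m : ℕ} {E : Type*} (g : Fin m → E) (π : Equiv.Perm (Fin m)) :
    (↑(List.ofFn fun j => g (π j)) : Multiset E) = ↑(List.ofFn g) := by
  rw [List.ofFn_eq_map, List.ofFn_eq_map, ← Multiset.map_coe, ← Multiset.map_coe]
  have h1 : (↑(List.finRange m) : Multiset (Fin m)) = (Finset.univ : Finset (Fin m)).val := by
    rw [Fin.univ_def]
  rw [h1]
  have h2 : Multiset.map (fun j => g (π j)) Finset.univ.val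
      = Multiset.map g (Multiset.map π Finset.univ.val) := by
    rw [Multiset.map_map]; rfl
  rw [h2]
  congr 1
  have := Finset.map_univ_equiv π
  calc Multiset.map (⇑π) Finset.univ.val = (Finset.univ.map π.toEmbedding).val := rfl
    _ = Finset.univ.val := by rw [this]

lemma meas_count {m : ℕ} (i : Fin m) (c : ℕ) :
    MeasurableSet {x : Fin m → ℝ | (Finset.univ.filter (fun j => x j < x i)).card ≤ c} := by
  have hm : Measurable (fun x : Fin m → ℝ => (Finset.univ.filter (fun j => x j < x i)).card) := by
    simp_rw [Finset.card_filter]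
    exact Finset.measurable_sum _ (fun j _ => Measurable.ite
      (measurableSet_lt (measurable_pi_apply j) (measurable_pi_apply i))
      measurable_const measurable_const)
  exact hm (MeasurableSet.of_discrete : MeasurableSet (Set.Iic c))

theorem stmt2 {Ω : Type*} [MeasureSpace Ω] [IsProbabilityMeasure (ℙ : Measure Ω)]
    (n : ℕ) (s : Fin (n + 1) → Ω → ℝ) (hmeas : ∀ i, Measurable (s i))
    (hexch : Exchangeable s) (α : ℝ) (hα : α ∈ Set.Ioo (0 : ℝ) 1) :
    ENNReal.ofReal ((⌈(1 - α) * (n + 1)⌉₊ : ℝ) / (n + 1)) ≤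
      ℙ {ω | (s (Fin.last n) ω : EReal) ≤
        kthSmallest (Multiset.ofList (List.ofFn fun i : Fin (n + 1) => ((s i ω : ℝ) : EReal)))
          ⌈(1 - α) * (n + 1)⌉₊} ∧
    1 - α ≤ (⌈(1 - α) * (n + 1)⌉₊ : ℝ) / (n + 1) := by
  classical
  obtain ⟨hα0, hα1⟩ := hα
  set k := ⌈(1 - α) * (n + 1)⌉₊ with hkdef
  have hnpos : (0:ℝ) < (n:ℝ) + 1 := by positivity
  have hk1 : 1 ≤ k := Nat.one_le_iff_ne_zero.mpr (by
    rw [hkdef, ← Nat.pos_iff_ne_zero, Nat.ceil_pos]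
    nlinarith)
  have hk2 : k ≤ n + 1 := by
    rw [hkdef, Nat.ceil_le]
    push_cast
    nlinarith
  have hkle : (1 - α) * (n + 1) ≤ (k:ℝ) := Nat.le_ceil _
  constructor
  · -- probabilistic part
    set ms : (Fin (n+1) → ℝ) → Multiset EReal :=
      fun x => ↑(List.ofFn fun j => ((x j : ℝ) : EReal)) with hms
    have hcard : ∀ x, Multiset.card (ms x) = n + 1 := by
      intro x; simp [hms]
    set B : Fin (n+1) → Set (Fin (n+1) → ℝ) :=
      fun i => {x | ((x i : ℝ) : EReal) ≤ kthSmallest (ms x) k} with hB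
    have hBeq : ∀ i, B i = {x | (Finset.univ.filter (fun j => x j < x i)).card ≤ k - 1} := by
      intro i
      ext x
      rw [hB]
      simp only [Set.mem_setOf_eq]
      rw [le_kth_iff (ms x) (hcard x) hk1 hk2, hms, countP_ofFn]
      simp [EReal.coe_lt_coe_iff]
    have hBmeas : ∀ i, MeasurableSet (B i) := by
      intro i; rw [hBeq i]; exact meas_count i (k-1)
    set S : Ω → Fin (n+1) → ℝ := fun ω j => s j ω with hS
    have hSmeas : Measurable S := measurable_pi_lambda _ hmeas
    set A : Fin (n+1) → Set Ω := fun i => S ⁻¹' B i with hA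
    have hAmeas : ∀ i, MeasurableSet (A i) := fun i => hSmeas (hBmeas i)
    -- all A i have the same probability
    have hsame : ∀ i, ℙ (A i) = ℙ (A (Fin.last n)) := by
      intro i
      set π := Equiv.swap i (Fin.last n) with hπ
      have hTmeas : Measurable (fun ω (j : Fin (n+1)) => s (π j) ω) :=
        measurable_pi_lambda _ (fun j => hmeas (π j))
      have hset : (fun ω (j : Fin (n+1)) => s (π j) ω) ⁻¹' B (Fin.last n) = A i := by
        ext ω
        simp only [hA, hB, Set.mem_preimage, Set.mem_setOf_eq]
        have h1 : π (Fin.last n) = i := Equiv.swap_apply_right _ _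
        have h2 : ms (fun j => s (π j) ω) = ms (S ω) := by
          rw [hms]
          exact ofFn_perm (fun j => ((s j ω : ℝ) : EReal)) π
        rw [h1, h2]
      calc ℙ (A i) = ℙ ((fun ω (j : Fin (n+1)) => s (π j) ω) ⁻¹' B (Fin.last n)) := by
            rw [hset]
        _ = (Measure.map (fun ω (j : Fin (n+1)) => s (π j) ω) ℙ) (B (Fin.last n)) := by
            rw [Measure.map_apply hTmeas (hBmeas _)]
        _ = (Measure.map (fun ω (j : Fin (n+1)) => s j ω) ℙ) (B (Fin.last n)) := by
            rw [hexch π]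
        _ = ℙ (A (Fin.last n)) := by
            rw [Measure.map_apply hSmeas (hBmeas _)]
    -- pointwise: at least k of the events hold
    have hpoint : ∀ ω, (k : ℝ≥0∞) ≤
        ∑ i : Fin (n+1), (A i).indicator (fun _ => (1:ℝ≥0∞)) ω := by
      intro ω
      have hcount : k ≤ (Finset.univ.filter (fun i => ω ∈ A i)).card := by
        have h := countP_le_kth (ms (S ω)) (hcard (S ω)) hk1 hk2
        rw [hms, countP_ofFn] at h
        refine le_trans h (le_of_eq ?_)
        congr 1
        apply Finset.filter_congr
        intro i _
        simp only [hA, hB, hms, Set.mem_preimage, Set.mem_setOf_eq]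
      calc (k : ℝ≥0∞) ≤ ((Finset.univ.filter (fun i => ω ∈ A i)).card : ℝ≥0∞) := by
            exact_mod_cast hcount
        _ = ∑ i : Fin (n+1), (A i).indicator (fun _ => (1:ℝ≥0∞)) ω := by
            rw [Finset.card_filter]
            push_cast
            refine Finset.sum_congr rfl (fun i _ => ?_)
            simp [Set.indicator_apply]
    -- integrate
    have hsum : (k : ℝ≥0∞) ≤ ∑ i : Fin (n+1), ℙ (A i) := by
      calc (k : ℝ≥0∞) = ∫⁻ _, (k : ℝ≥0∞) ∂(ℙ : Measure Ω) := by
            rw [lintegral_const, measure_univ, mul_one]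
        _ ≤ ∫⁻ ω, ∑ i : Fin (n+1), (A i).indicator (fun _ => (1:ℝ≥0∞)) ω ∂ℙ :=
            lintegral_mono hpoint
        _ = ∑ i : Fin (n+1), ∫⁻ ω, (A i).indicator (fun _ => (1:ℝ≥0∞)) ω ∂ℙ :=
            lintegral_finset_sum _ (fun i _ =>
              Measurable.indicator measurable_const (hAmeas i))
        _ = ∑ i : Fin (n+1), ℙ (A i) := by
            refine Finset.sum_congr rfl (fun i _ => ?_)
            rw [lintegral_indicator (hAmeas i), lintegral_const,
              Measure.restrict_apply MeasurableSet.univ, Set.univ_inter, one_mul]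
    have hsum2 : (k : ℝ≥0∞) ≤ ((n:ℝ≥0∞) + 1) * ℙ (A (Fin.last n)) := by
      calc (k : ℝ≥0∞) ≤ ∑ i : Fin (n+1), ℙ (A i) := hsum
        _ = ∑ _i : Fin (n+1), ℙ (A (Fin.last n)) := Finset.sum_congr rfl (fun i _ => hsame i)
        _ = ((n:ℝ≥0∞) + 1) * ℙ (A (Fin.last n)) := by
            rw [Finset.sum_const, Finset.card_univ, Fintype.card_fin, nsmul_eq_mul]
            push_cast; ring_nf
    have hgoal : ENNReal.ofReal ((k : ℝ) / (n + 1)) ≤ ℙ (A (Fin.last n)) := by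
      have h1 : ENNReal.ofReal ((k : ℝ) / (n + 1)) = (k : ℝ≥0∞) / ((n:ℝ≥0∞) + 1) := by
        rw [ENNReal.ofReal_div_of_pos hnpos]
        congr 1
        · exact ENNReal.ofReal_natCast k
        · rw [show ((n:ℝ) + 1) = ((n + 1 : ℕ) : ℝ) by push_cast; ring,
            ENNReal.ofReal_natCast]
          push_cast; ring
      rw [h1]
      exact ENNReal.div_le_of_le_mul' hsum2
    convert hgoal using 2
    rfl
  · rw [le_div_iff₀ hnpos]
    exact hkle
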